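/- Let Φ₁ = (G, φ₁) and Φ₂ = (G, φ₂) be two complex unit gain graphs on the same simple graph G whose cycles are pairwise vertex-disjoint, and suppose Re(φ₁(C)) = 0 = Re(φ₂(C)) for every cycle C of G. Then Φ₁ and Φ₂ are equienergetic: E(Φ₁) = E(Φ₂). -/

import Mathlib

open Matrix BigOperators

/-- `A` is the adjacency matrix of a complex unit gain graph on `G`. -/
def IsGainMatrix {n : ℕ} (G : SimpleGraph (Fin n)) (A : Matrix (Fin n) (Fin n) ℂ) : Prop :=
  A.IsHermitian ∧ (∀ i j, G.Adj i j → ‖A i j‖ = 1) ∧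
    ∀ i j, ¬ G.Adj i j → A i j = 0

/-- The gain of a walk: the product of the gains along its darts. -/
def walkGain {n : ℕ} {G : SimpleGraph (Fin n)} (A : Matrix (Fin n) (Fin n) ℂ)
    {u v : Fin n} (w : G.Walk u v) : ℂ :=
  (w.darts.map fun d => A d.fst d.snd).prod

section AuxProofs
open Polynomial


lemma charpoly_unitary_conj {n : ℕ} (U : Matrix.unitaryGroup (Fin n) ℂ)
    (D : Matrix (Fin n) (Fin n) ℂ) :
    ((U : Matrix (Fin n) (Fin n) ℂ) * D * star (U : Matrix (Fin n) (Fin n) ℂ)).charpoly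
      = D.charpoly := by
  have hU : (U : Matrix (Fin n) (Fin n) ℂ) * star (U : Matrix (Fin n) (Fin n) ℂ) = 1 :=
    Matrix.mem_unitaryGroup_iff.mp U.2
  have hmap : ∀ (M N : Matrix (Fin n) (Fin n) ℂ),
      (M * N).map (C : ℂ →+* ℂ[X]) = M.map C * N.map C := fun M N => by
    ext i j; simp [Matrix.map_apply, Matrix.mul_apply, map_sum]
  have hC : charmatrix ((U : Matrix (Fin n) (Fin n) ℂ) * D * star (U : Matrix (Fin n) (Fin n) ℂ))
      = ((U : Matrix (Fin n) (Fin n) ℂ).map C) * charmatrix D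
          * ((star (U : Matrix (Fin n) (Fin n) ℂ)).map C) := by
    rw [charmatrix, charmatrix]
    simp only [RingHom.mapMatrix_apply]
    rw [Matrix.mul_sub, Matrix.sub_mul, hmap, hmap]
    congr 1
    -- scalar X = map U * scalar X * map (star U)
    rw [Matrix.scalar_apply]
    have hcomm : ((U : Matrix (Fin n) (Fin n) ℂ)).map C * Matrix.diagonal (fun _ => (X : ℂ[X]))
        = Matrix.diagonal (fun _ => (X : ℂ[X])) * ((U : Matrix (Fin n) (Fin n) ℂ)).map C := by
      ext i j
      rw [Matrix.mul_diagonal, Matrix.diagonal_mul, mul_comm]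
    rw [hcomm, Matrix.mul_assoc, ← hmap, hU]
    rw [Matrix.map_one _ (map_zero C) (map_one C), Matrix.mul_one]
  rw [Matrix.charpoly, Matrix.charpoly, hC, Matrix.det_mul, Matrix.det_mul]
  have : ((U : Matrix (Fin n) (Fin n) ℂ).map C).det
      * ((star (U : Matrix (Fin n) (Fin n) ℂ)).map C).det = 1 := by
    rw [← Matrix.det_mul, ← hmap, hU]
    rw [Matrix.map_one _ (map_zero C) (map_one C), Matrix.det_one]
  calc ((U : Matrix (Fin n) (Fin n) ℂ).map C).det * (charmatrix D).det
        * ((star (U : Matrix (Fin n) (Fin n) ℂ)).map C).det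
      = (charmatrix D).det * (((U : Matrix (Fin n) (Fin n) ℂ).map C).det
        * ((star (U : Matrix (Fin n) (Fin n) ℂ)).map C).det) := by ring
    _ = (charmatrix D).det := by rw [this, mul_one]

lemma herm_charpoly {n : ℕ} {A : Matrix (Fin n) (Fin n) ℂ} (hA : A.IsHermitian) :
    A.charpoly = ∏ i, (X - C (hA.eigenvalues i : ℂ)) := by
  have h := hA.spectral_theorem
  calc A.charpoly
      = (Matrix.diagonal (RCLike.ofReal ∘ hA.eigenvalues) : Matrix (Fin n) (Fin n) ℂ).charpoly := by
        conv_lhs => rw [h]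
        exact charpoly_unitary_conj _ _
    _ = ∏ i, (X - C (hA.eigenvalues i : ℂ)) := by
        rw [Matrix.charpoly]
        have : charmatrix (Matrix.diagonal (RCLike.ofReal ∘ hA.eigenvalues) : Matrix (Fin n) (Fin n) ℂ)
            = Matrix.diagonal (fun i => (X - C (hA.eigenvalues i : ℂ))) := by
          ext i j
          by_cases hij : i = j
          · subst hij; simp [charmatrix_apply_eq, Matrix.diagonal_apply_eq]
          · simp [charmatrix_apply_ne _ _ _ hij, Matrix.diagonal_apply_ne _ hij]
        rw [this, Matrix.det_diagonal]


namespace EqEnergy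

variable {n : ℕ} {G : SimpleGraph (Fin n)}

lemma rev_map_range_succ {β : Type*} (f : ℕ → β) (m : ℕ) :
    ((List.range (m+1)).map f).reverse = f m :: ((List.range m).map f).reverse := by
  rw [List.range_succ, List.map_append, List.reverse_append]; simp

def permWalk (c : Equiv.Perm (Fin n)) (i : Fin n)
    (hadj : ∀ j ∈ c.support, G.Adj (c j) j) (hi : i ∈ c.support) :
    ∀ k : ℕ, G.Walk ((c ^ k) i) i
  | 0 => SimpleGraph.Walk.nil.copy (by simp) rfl
  | (k+1) => SimpleGraph.Walk.cons
      (by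
        have h := hadj ((c ^ k) i) (Equiv.Perm.pow_apply_mem_support.mpr hi)
        have hp : (c ^ (k+1)) i = c ((c ^ k) i) := by
          rw [pow_succ']; rfl
        rw [hp]; exact h)
      (permWalk c i hadj hi k)

lemma permWalk_support (c : Equiv.Perm (Fin n)) (i : Fin n)
    (hadj : ∀ j ∈ c.support, G.Adj (c j) j) (hi : i ∈ c.support) (k : ℕ) :
    (permWalk c i hadj hi k).support
      = ((List.range (k+1)).map (fun t => (c ^ t) i)).reverse := by
  induction k with
  | zero => simp [permWalk, rev_map_range_succ]
  | succ k ih =>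
      rw [permWalk, SimpleGraph.Walk.support_cons, ih,
        rev_map_range_succ _ (k+1)]

lemma permWalk_gain (A : Matrix (Fin n) (Fin n) ℂ) (c : Equiv.Perm (Fin n)) (i : Fin n)
    (hadj : ∀ j ∈ c.support, G.Adj (c j) j) (hi : i ∈ c.support) (k : ℕ) :
    walkGain A (permWalk c i hadj hi k)
      = ∏ t ∈ Finset.range k, A ((c ^ (t+1)) i) ((c ^ t) i) := by
  induction k with
  | zero => simp [permWalk, walkGain]
  | succ k ih =>
      rw [permWalk]
      show A _ _ * walkGain A (permWalk c i hadj hi k) = _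
      rw [ih, Finset.prod_range_succ, mul_comm]

lemma permWalk_edges (c : Equiv.Perm (Fin n)) (i : Fin n)
    (hadj : ∀ j ∈ c.support, G.Adj (c j) j) (hi : i ∈ c.support) (k : ℕ) :
    ∀ e ∈ (permWalk c i hadj hi k).edges,
      ∃ t, t < k ∧ e = s(((c ^ (t+1)) i), ((c ^ t) i)) := by
  induction k with
  | zero => simp [permWalk]
  | succ k ih =>
      intro e he
      rw [permWalk, SimpleGraph.Walk.edges_cons] at he
      rcases List.mem_cons.mp he with h | h
      · exact ⟨k, Nat.lt_succ_self k, h⟩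
      · obtain ⟨t, ht, rfl⟩ := ih e h
        exact ⟨t, ht.trans (Nat.lt_succ_self k), rfl⟩

lemma re_prod_eq_zero (A : Matrix (Fin n) (Fin n) ℂ) (hA : IsGainMatrix G A)
    (hre : ∀ (v : Fin n) (c : G.Walk v v), c.IsCycle → (walkGain A c).re = 0)
    (c : Equiv.Perm (Fin n)) (hc : c.IsCycle) (hL : 3 ≤ c.support.card)
    (i : Fin n) (hi : i ∈ c.support) :
    (∏ j ∈ c.support, A (c j) j).re = 0 := by
  by_cases hadj : ∀ j ∈ c.support, G.Adj (c j) j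
  case neg =>
    push_neg at hadj
    obtain ⟨j, hj, hnadj⟩ := hadj
    have hz : ∏ j ∈ c.support, A (c j) j = 0 :=
      Finset.prod_eq_zero hj (hA.2.2 _ _ hnadj)
    rw [hz]
    simp
  case pos =>
  have horder : orderOf c = c.support.card := hc.orderOf
  set L := c.support.card with hLdef
  have hL0 : 0 < L := by omega
  have hcL : c ^ L = 1 := by rw [← horder]; exact pow_orderOf_eq_one c
  have hinj : ∀ a b : ℕ, a < L → b < L → (c ^ a) i = (c ^ b) i → a = b := by
    have key : ∀ a b : ℕ, a ≤ b → b < L → (c ^ a) i = (c ^ b) i → a = b := by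
      intro a b hab hbL h
      by_contra hne
      have hd : 0 < b - a := by omega
      have h1 : (c ^ a) ((c ^ (b - a)) i) = (c ^ a) i := by
        rw [← Equiv.Perm.mul_apply, ← pow_add, show a + (b - a) = b by omega]
        exact h.symm
      have h2 : (c ^ (b - a)) i = i := (c ^ a).injective h1
      have h3 : c ^ (b - a) = 1 :=
        hc.pow_eq_one_iff.mpr ⟨i, Equiv.Perm.mem_support.mp hi, h2⟩
      have := orderOf_le_of_pow_eq_one hd h3
      omega
    intro a b ha hb h
    rcases le_total a b with hab | hab
    · exact key a b hab hb h
    · exact (key b a hab ha h.symm).symm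
  have hsurj : ∀ j ∈ c.support, ∃ t, t < L ∧ (c ^ t) i = j := by
    intro j hj
    have hsc : c.SameCycle i j :=
      hc.sameCycle (Equiv.Perm.mem_support.mp hi) (Equiv.Perm.mem_support.mp hj)
    obtain ⟨t, _, _, ht⟩ := hsc.exists_pow_eq c
    refine ⟨t % L, Nat.mod_lt _ hL0, ?_⟩
    have hsplit : c ^ t = (c ^ L) ^ (t / L) * c ^ (t % L) := by
      rw [← pow_mul, ← pow_add]
      congr 1
      exact (Nat.div_add_mod t L).symm
    rw [hsplit, hcL, one_pow, one_mul] at ht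
    exact ht
  obtain ⟨m, hm⟩ : ∃ m, L = m + 1 := ⟨L - 1, by omega⟩
  have hadjtop : G.Adj ((c ^ (m+1)) i) ((c ^ m) i) := by
    have h := hadj ((c ^ m) i) (Equiv.Perm.pow_apply_mem_support.mpr hi)
    have hp : (c ^ (m+1)) i = c ((c ^ m) i) := by rw [pow_succ']; rfl
    rw [hp]; exact h
  have hstart : (c ^ (m+1)) i = i := by
    rw [← hm, hcL]; rfl
  set w := permWalk c i hadj hi with hw
  have hpath : (w m).IsPath := by
    refine SimpleGraph.Walk.IsPath.mk' ?_
    rw [hw, permWalk_support, List.nodup_reverse]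
    refine List.Nodup.map_on ?_ List.nodup_range
    intro x hx y hy hxy
    exact hinj x y (by have := List.mem_range.mp hx; omega)
      (by have := List.mem_range.mp hy; omega) hxy
  set cyc : G.Walk i i := (SimpleGraph.Walk.cons hadjtop (w m)).copy hstart rfl with hcycdef
  have hedge_not_mem : s(((c ^ (m+1)) i), ((c ^ m) i)) ∉ (w m).edges := by
    intro hmem
    obtain ⟨t, ht, heq⟩ := permWalk_edges c i hadj hi m _ hmem
    rw [Sym2.eq_iff] at heq
    rcases heq with ⟨h1, h2⟩ | ⟨h1, h2⟩
    · have : m = t := hinj m t (by omega) (by omega) h2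
      omega
    · -- (c^(m+1)) i = (c^t) i and (c^m) i = (c^(t+1)) i
      have h0 : (c ^ (0:ℕ)) i = (c ^ t) i := by
        rw [← h1, ← hm, hcL]; rfl
      have ht0 : (0:ℕ) = t := hinj 0 t (by omega) (by omega) h0
      subst ht0
      have : m = 1 := hinj m 1 (by omega) (by omega) (by simpa using h2)
      omega
  have hcyc : cyc.IsCycle := by
    have hne : cyc ≠ SimpleGraph.Walk.nil := by
      intro hnil
      have hlen : cyc.length = (SimpleGraph.Walk.nil : G.Walk i i).length := by rw [hnil]
      rw [hcycdef, SimpleGraph.Walk.length_copy, SimpleGraph.Walk.length_cons,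
        SimpleGraph.Walk.length_nil] at hlen
      omega
    refine ⟨⟨⟨?_⟩, hne⟩, ?_⟩
    · rw [hcycdef, SimpleGraph.Walk.edges_copy, SimpleGraph.Walk.edges_cons]
      exact List.nodup_cons.mpr ⟨hedge_not_mem, hpath.isTrail.edges_nodup⟩
    · rw [hcycdef, SimpleGraph.Walk.support_copy, SimpleGraph.Walk.support_cons]
      exact hpath.support_nodup
  have hgain : walkGain A cyc = ∏ j ∈ c.support, A (c j) j := by
    have h1 : walkGain A cyc = A ((c ^ (m+1)) i) ((c ^ m) i) * walkGain A (w m) := by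
      rw [hcycdef, walkGain, SimpleGraph.Walk.darts_copy, SimpleGraph.Walk.darts_cons,
        List.map_cons, List.prod_cons]
      rfl
    rw [h1, hw, permWalk_gain, mul_comm, ← Finset.prod_range_succ, ← hm]
    -- now : ∏ t in range L, A ((c^(t+1)) i) ((c^t) i) = ∏ j in supp, A (c j) j
    refine Finset.prod_bij (fun t _ => (c ^ t) i) ?_ ?_ ?_ ?_
    · intro t _
      exact Equiv.Perm.pow_apply_mem_support.mpr hi
    · intro a ha b hb h
      exact hinj a b (Finset.mem_range.mp ha) (Finset.mem_range.mp hb) h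
    · intro j hj
      obtain ⟨t, ht, h⟩ := hsurj j hj
      exact ⟨t, Finset.mem_range.mpr ht, h⟩
    · intro t _
      have hp : (c ^ (t+1)) i = c ((c ^ t) i) := by rw [pow_succ']; rfl
      rw [hp]
  rw [← hgain]
  exact hre i cyc hcyc



variable {n : ℕ}

def movedSet (σ : Equiv.Perm (Fin n)) : Finset (Fin n) :=
  Finset.univ.filter (fun j => σ (σ j) ≠ j)

lemma mem_movedSet {σ : Equiv.Perm (Fin n)} {j : Fin n} :
    j ∈ movedSet σ ↔ σ (σ j) ≠ j := by
  simp [movedSet]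

lemma movedSet_nonempty {σ : Equiv.Perm (Fin n)} (hσ : σ * σ ≠ 1) :
    (movedSet σ).Nonempty := by
  by_contra h
  rw [Finset.not_nonempty_iff_eq_empty] at h
  apply hσ
  apply Equiv.ext
  intro j
  have hj : j ∉ movedSet σ := by rw [h]; exact Finset.notMem_empty j
  rw [mem_movedSet, not_not] at hj
  simpa [Equiv.Perm.mul_apply] using hj

noncomputable def fpt {σ : Equiv.Perm (Fin n)} (hσ : σ * σ ≠ 1) : Fin n :=
  (movedSet σ).min' (movedSet_nonempty hσ)

noncomputable def flip (σ : Equiv.Perm (Fin n)) : Equiv.Perm (Fin n) :=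
  if h : σ * σ = 1 then σ
  else σ * (σ.cycleOf (fpt h))⁻¹ * (σ.cycleOf (fpt h))⁻¹

lemma flip_of_sq_eq_one {σ : Equiv.Perm (Fin n)} (hσ : σ * σ = 1) : flip σ = σ :=
  dif_pos hσ

lemma flip_of_sq_ne_one {σ : Equiv.Perm (Fin n)} (hσ : σ * σ ≠ 1) :
    flip σ = σ * (σ.cycleOf (fpt hσ))⁻¹ * (σ.cycleOf (fpt hσ))⁻¹ :=
  dif_neg hσ

section Facts
variable {σ : Equiv.Perm (Fin n)}

lemma fpt_moved (hσ : σ * σ ≠ 1) : σ (σ (fpt hσ)) ≠ fpt hσ :=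
  mem_movedSet.mp ((movedSet σ).min'_mem (movedSet_nonempty hσ))

lemma fpt_apply_ne (hσ : σ * σ ≠ 1) : σ (fpt hσ) ≠ fpt hσ := by
  intro h
  exact fpt_moved hσ (by rw [h, h])

lemma cyc_isCycle (hσ : σ * σ ≠ 1) : (σ.cycleOf (fpt hσ)).IsCycle :=
  Equiv.Perm.isCycle_cycleOf σ (fpt_apply_ne hσ)

lemma fpt_mem_supp_cyc (hσ : σ * σ ≠ 1) : fpt hσ ∈ (σ.cycleOf (fpt hσ)).support := by
  rw [Equiv.Perm.mem_support, Equiv.Perm.cycleOf_apply_self]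
  exact fpt_apply_ne hσ

lemma mem_supp_cyc_iff (hσ : σ * σ ≠ 1) {j : Fin n} :
    j ∈ (σ.cycleOf (fpt hσ)).support ↔ σ.SameCycle (fpt hσ) j := by
  rw [Equiv.Perm.mem_support_cycleOf_iff]
  constructor
  · exact fun h => h.1
  · intro h
    exact ⟨h, Equiv.Perm.mem_support.mpr (fpt_apply_ne hσ)⟩

lemma cyc_apply_eq (hσ : σ * σ ≠ 1) {j : Fin n}
    (hj : j ∈ (σ.cycleOf (fpt hσ)).support) :
    (σ.cycleOf (fpt hσ)) j = σ j := by
  rw [Equiv.Perm.cycleOf_apply, if_pos ((mem_supp_cyc_iff hσ).mp hj)]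

lemma sigma_mem_supp_cyc (hσ : σ * σ ≠ 1) {j : Fin n} :
    σ j ∈ (σ.cycleOf (fpt hσ)).support ↔ j ∈ (σ.cycleOf (fpt hσ)).support := by
  rw [mem_supp_cyc_iff hσ, mem_supp_cyc_iff hσ, Equiv.Perm.sameCycle_apply_right]

lemma inv_mem_supp_cyc (hσ : σ * σ ≠ 1) {j : Fin n}
    (hj : j ∈ (σ.cycleOf (fpt hσ)).support) :
    (σ.cycleOf (fpt hσ))⁻¹ j ∈ (σ.cycleOf (fpt hσ)).support := by
  rw [← Equiv.Perm.support_inv] at hj ⊢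
  exact Equiv.Perm.apply_mem_support.mpr hj

lemma cyc_sq_apply_fpt (hσ : σ * σ ≠ 1) :
    (σ.cycleOf (fpt hσ)) ((σ.cycleOf (fpt hσ)) (fpt hσ)) ≠ fpt hσ := by
  have h2 : ((σ.cycleOf (fpt hσ)) ^ (2:ℕ)) (fpt hσ) = (σ ^ (2:ℕ)) (fpt hσ) :=
    Equiv.Perm.cycleOf_pow_apply_self σ (fpt hσ) 2
  have e1 : ((σ.cycleOf (fpt hσ)) ^ (2:ℕ)) (fpt hσ)
      = (σ.cycleOf (fpt hσ)) ((σ.cycleOf (fpt hσ)) (fpt hσ)) := by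
    rw [pow_two, Equiv.Perm.mul_apply]
  have e2 : (σ ^ (2:ℕ)) (fpt hσ) = σ (σ (fpt hσ)) := by
    rw [pow_two, Equiv.Perm.mul_apply]
  rw [← e1, h2, e2]
  exact fpt_moved hσ

lemma cyc_sq_ne_one (hσ : σ * σ ≠ 1) : (σ.cycleOf (fpt hσ)) ^ (2:ℕ) ≠ 1 := by
  intro h
  apply cyc_sq_apply_fpt hσ
  have h' : ((σ.cycleOf (fpt hσ)) ^ (2:ℕ)) (fpt hσ) = fpt hσ := by rw [h]; rfl
  rw [pow_two, Equiv.Perm.mul_apply] at h'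
  exact h'

lemma cyc_card_ge_three (hσ : σ * σ ≠ 1) : 3 ≤ (σ.cycleOf (fpt hσ)).support.card := by
  have horder : orderOf (σ.cycleOf (fpt hσ)) = (σ.cycleOf (fpt hσ)).support.card :=
    (cyc_isCycle hσ).orderOf
  have h1 : orderOf (σ.cycleOf (fpt hσ)) ≠ 1 := by
    intro h
    have := orderOf_eq_one_iff.mp h
    apply fpt_apply_ne hσ
    rw [← Equiv.Perm.cycleOf_apply_self, this]; rfl
  have h2 : orderOf (σ.cycleOf (fpt hσ)) ≠ 2 := by
    intro h
    apply cyc_sq_ne_one hσ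
    rw [← h]
    exact pow_orderOf_eq_one _
  have h0 : orderOf (σ.cycleOf (fpt hσ)) ≠ 0 := by
    intro h
    rw [h] at horder
    have hmem := fpt_mem_supp_cyc hσ
    have hemp : (σ.cycleOf (fpt hσ)).support = ∅ := Finset.card_eq_zero.mp horder.symm
    rw [hemp] at hmem
    exact Finset.notMem_empty _ hmem
  omega

lemma flip_apply_mem (hσ : σ * σ ≠ 1) {j : Fin n}
    (hj : j ∈ (σ.cycleOf (fpt hσ)).support) :
    flip σ j = (σ.cycleOf (fpt hσ))⁻¹ j := by
  have h1 : (σ.cycleOf (fpt hσ))⁻¹ j ∈ (σ.cycleOf (fpt hσ)).support := inv_mem_supp_cyc hσ hj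
  have h2 : (σ.cycleOf (fpt hσ))⁻¹ ((σ.cycleOf (fpt hσ))⁻¹ j) ∈ (σ.cycleOf (fpt hσ)).support :=
    inv_mem_supp_cyc hσ h1
  rw [flip_of_sq_ne_one hσ, Equiv.Perm.mul_apply, Equiv.Perm.mul_apply,
    ← cyc_apply_eq hσ h2, ← Equiv.Perm.mul_apply, mul_inv_cancel, Equiv.Perm.one_apply]

lemma flip_apply_not_mem (hσ : σ * σ ≠ 1) {j : Fin n}
    (hj : j ∉ (σ.cycleOf (fpt hσ)).support) :
    flip σ j = σ j := by
  have h1 : (σ.cycleOf (fpt hσ))⁻¹ j = j := by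
    rw [← Equiv.Perm.support_inv] at hj
    exact Equiv.Perm.notMem_support.mp hj
  rw [flip_of_sq_ne_one hσ, Equiv.Perm.mul_apply, Equiv.Perm.mul_apply, h1, h1]

lemma flip_support (hσ : σ * σ ≠ 1) : (flip σ).support = σ.support := by
  ext j
  by_cases hj : j ∈ (σ.cycleOf (fpt hσ)).support
  · rw [Equiv.Perm.mem_support, Equiv.Perm.mem_support, flip_apply_mem hσ hj]
    constructor
    · intro _
      exact Equiv.Perm.mem_support.mp (Equiv.Perm.support_cycleOf_le σ (fpt hσ) hj)
    · intro _ h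
      have h' : j ∈ ((σ.cycleOf (fpt hσ))⁻¹).support := by
        rw [Equiv.Perm.support_inv]; exact hj
      rw [Equiv.Perm.mem_support] at h'
      exact h' h
  · rw [Equiv.Perm.mem_support, Equiv.Perm.mem_support, flip_apply_not_mem hσ hj]

lemma cyc_supp_subset_moved (hσ : σ * σ ≠ 1) :
    (σ.cycleOf (fpt hσ)).support ⊆ movedSet σ := by
  intro j hj
  rw [mem_movedSet]
  have hσj : σ j ∈ (σ.cycleOf (fpt hσ)).support := (sigma_mem_supp_cyc hσ).mpr hj
  have e : (σ.cycleOf (fpt hσ)) ((σ.cycleOf (fpt hσ)) j) = σ (σ j) := by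
    rw [cyc_apply_eq hσ hj, cyc_apply_eq hσ hσj]
  intro h
  apply cyc_sq_ne_one hσ
  refine (cyc_isCycle hσ).pow_eq_one_iff.mpr ⟨j, Equiv.Perm.mem_support.mp hj, ?_⟩
  rw [pow_two, Equiv.Perm.mul_apply, e]
  exact h

lemma not_mem_moved_outside (hσ : σ * σ ≠ 1) {j : Fin n}
    (hj : j ∉ (σ.cycleOf (fpt hσ)).support) :
    σ j ∉ (σ.cycleOf (fpt hσ)).support := by
  intro h
  exact hj ((sigma_mem_supp_cyc hσ).mp h)

lemma flip_movedSet (hσ : σ * σ ≠ 1) : movedSet (flip σ) = movedSet σ := by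
  ext j
  by_cases hj : j ∈ (σ.cycleOf (fpt hσ)).support
  · have hcj : (σ.cycleOf (fpt hσ))⁻¹ j ∈ (σ.cycleOf (fpt hσ)).support := inv_mem_supp_cyc hσ hj
    have hleft : flip σ (flip σ j) = (σ.cycleOf (fpt hσ))⁻¹ ((σ.cycleOf (fpt hσ))⁻¹ j) := by
      rw [flip_apply_mem hσ hj, flip_apply_mem hσ hcj]
    have h1 : j ∈ movedSet (flip σ) := by
      rw [mem_movedSet, hleft]
      intro h
      apply cyc_sq_ne_one hσ
      have hinv : (((σ.cycleOf (fpt hσ))⁻¹) ^ (2:ℕ)) j = j := by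
        rw [pow_two, Equiv.Perm.mul_apply]; exact h
      have hone : ((σ.cycleOf (fpt hσ))⁻¹) ^ (2:ℕ) = 1 := by
        refine (cyc_isCycle hσ).inv.pow_eq_one_iff.mpr ⟨j, ?_, hinv⟩
        rw [← Equiv.Perm.mem_support, Equiv.Perm.support_inv]
        exact hj
      rw [inv_pow, inv_eq_one] at hone
      exact hone
    have h2 : j ∈ movedSet σ := cyc_supp_subset_moved hσ hj
    simp [h1, h2]
  · have hout : flip σ j = σ j := flip_apply_not_mem hσ hj
    have hout2 : flip σ (σ j) = σ (σ j) := flip_apply_not_mem hσ (not_mem_moved_outside hσ hj)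
    rw [mem_movedSet, mem_movedSet, hout, hout2]

lemma flip_sq_ne_one (hσ : σ * σ ≠ 1) : flip σ * flip σ ≠ 1 := by
  intro h
  have hne := movedSet_nonempty hσ
  rw [← flip_movedSet hσ] at hne
  obtain ⟨j, hj⟩ := hne
  rw [mem_movedSet] at hj
  apply hj
  have h' : (flip σ * flip σ) j = j := by rw [h]; rfl
  rw [Equiv.Perm.mul_apply] at h'
  exact h'

lemma flip_fpt (hσ : σ * σ ≠ 1) : fpt (flip_sq_ne_one hσ) = fpt hσ := by
  unfold fpt
  congr 1
  exact flip_movedSet hσ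

lemma commute_cyc_sigma (hσ : σ * σ ≠ 1) : Commute (σ.cycleOf (fpt hσ)) σ := by
  rw [Commute, SemiconjBy]
  apply Equiv.ext
  intro j
  rw [Equiv.Perm.mul_apply, Equiv.Perm.mul_apply]
  by_cases hj : j ∈ (σ.cycleOf (fpt hσ)).support
  · have hσj : σ j ∈ (σ.cycleOf (fpt hσ)).support := (sigma_mem_supp_cyc hσ).mpr hj
    rw [cyc_apply_eq hσ hσj, ← cyc_apply_eq hσ hj]
  · have h1 : (σ.cycleOf (fpt hσ)) j = j := Equiv.Perm.notMem_support.mp hj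
    have h2 : (σ.cycleOf (fpt hσ)) (σ j) = σ j :=
      Equiv.Perm.notMem_support.mp (not_mem_moved_outside hσ hj)
    rw [h1, h2]

lemma flip_cycleOf (hσ : σ * σ ≠ 1) :
    (flip σ).cycleOf (fpt hσ) = (σ.cycleOf (fpt hσ))⁻¹ := by
  have hτ : flip σ = (σ.cycleOf (fpt hσ))⁻¹ * (σ * (σ.cycleOf (fpt hσ))⁻¹) := by
    rw [flip_of_sq_ne_one hσ]
    have hcomm : σ * (σ.cycleOf (fpt hσ))⁻¹ = (σ.cycleOf (fpt hσ))⁻¹ * σ :=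
      ((commute_cyc_sigma hσ).symm.inv_right).eq
    calc σ * (σ.cycleOf (fpt hσ))⁻¹ * (σ.cycleOf (fpt hσ))⁻¹
        = (σ.cycleOf (fpt hσ))⁻¹ * σ * (σ.cycleOf (fpt hσ))⁻¹ := by rw [hcomm]
      _ = (σ.cycleOf (fpt hσ))⁻¹ * (σ * (σ.cycleOf (fpt hσ))⁻¹) := by group
  have hδi : (σ * (σ.cycleOf (fpt hσ))⁻¹) (fpt hσ) = fpt hσ := by
    have h1 : (σ.cycleOf (fpt hσ))⁻¹ (fpt hσ) ∈ (σ.cycleOf (fpt hσ)).support :=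
      inv_mem_supp_cyc hσ (fpt_mem_supp_cyc hσ)
    rw [Equiv.Perm.mul_apply, ← cyc_apply_eq hσ h1, ← Equiv.Perm.mul_apply, mul_inv_cancel, Equiv.Perm.one_apply]
  have hcommδ : Commute ((σ.cycleOf (fpt hσ))⁻¹) (σ * (σ.cycleOf (fpt hσ))⁻¹) := by
    have h1 : Commute (σ.cycleOf (fpt hσ)) σ := commute_cyc_sigma hσ
    have h2 : Commute (σ.cycleOf (fpt hσ)) ((σ.cycleOf (fpt hσ))⁻¹) :=
      Commute.inv_right (Commute.refl _)
    exact (h1.mul_right h2).inv_left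
  rw [hτ, Equiv.Perm.cycleOf_mul_of_apply_right_eq_self hcommδ _ hδi]
  refine (cyc_isCycle hσ).inv.cycleOf_eq ?_
  intro h
  apply fpt_apply_ne hσ
  have h2 : (σ.cycleOf (fpt hσ)) ((σ.cycleOf (fpt hσ))⁻¹ (fpt hσ))
      = (σ.cycleOf (fpt hσ)) (fpt hσ) := by rw [h]
  rw [← Equiv.Perm.mul_apply, mul_inv_cancel, Equiv.Perm.one_apply] at h2
  rw [← cyc_apply_eq hσ (fpt_mem_supp_cyc hσ), ← h2]

lemma flip_flip (hσ : σ * σ ≠ 1) : flip (flip σ) = σ := by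
  rw [flip_of_sq_ne_one (flip_sq_ne_one hσ), flip_fpt hσ, flip_cycleOf hσ, inv_inv,
    flip_of_sq_ne_one hσ]
  group

lemma flip_ne (hσ : σ * σ ≠ 1) : flip σ ≠ σ := by
  intro h
  have h1 : flip σ (fpt hσ) = (σ.cycleOf (fpt hσ))⁻¹ (fpt hσ) :=
    flip_apply_mem hσ (fpt_mem_supp_cyc hσ)
  have h2 : σ (fpt hσ) = (σ.cycleOf (fpt hσ)) (fpt hσ) :=
    (cyc_apply_eq hσ (fpt_mem_supp_cyc hσ)).symm
  rw [h, h2] at h1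
  apply cyc_sq_apply_fpt hσ
  rw [h1, ← Equiv.Perm.mul_apply, mul_inv_cancel, Equiv.Perm.one_apply]

lemma flip_sign (hσ : σ * σ ≠ 1) : Equiv.Perm.sign (flip σ) = Equiv.Perm.sign σ := by
  rw [flip_of_sq_ne_one hσ, _root_.map_mul, _root_.map_mul, mul_assoc,
    show (Equiv.Perm.sign (σ.cycleOf (fpt hσ))⁻¹) * (Equiv.Perm.sign (σ.cycleOf (fpt hσ))⁻¹) = 1
      from Int.units_mul_self _, mul_one]

end Facts


variable {n : ℕ} {G : SimpleGraph (Fin n)}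

lemma prod_supp_eq_of_invol (A : Matrix (Fin n) (Fin n) ℂ) (hA : IsGainMatrix G A)
    (σ : Equiv.Perm (Fin n)) (hσ : σ * σ = 1)
    (hadj : ∀ j ∈ σ.support, G.Adj (σ j) j) :
    ∏ j ∈ σ.support, A (σ j) j = 1 := by
  refine Finset.prod_involution (fun j _ => σ j) ?_ ?_ ?_ ?_
  · intro j hj
    have hστ : σ (σ j) = j := by rw [← Equiv.Perm.mul_apply, hσ]; rfl
    have habs : ‖A (σ j) j‖ = 1 := hA.2.1 _ _ (hadj j hj)
    rw [hστ, ← hA.1.apply j (σ j),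
      show (star (A (σ j) j)) = (starRingEnd ℂ) (A (σ j) j) from rfl,
      Complex.mul_conj, ← Complex.sq_norm, habs]
    norm_num
  · intro j hj _
    exact Equiv.Perm.mem_support.mp hj
  · intro j hj
    exact Equiv.Perm.apply_mem_support.mpr hj
  · intro j hj
    show σ (σ j) = j
    rw [← Equiv.Perm.mul_apply, hσ]; rfl

lemma prod_supp_invol_eq (A₁ A₂ : Matrix (Fin n) (Fin n) ℂ)
    (h₁ : IsGainMatrix G A₁) (h₂ : IsGainMatrix G A₂)
    (σ : Equiv.Perm (Fin n)) (hσ : σ * σ = 1) :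
    ∏ j ∈ σ.support, A₁ (σ j) j = ∏ j ∈ σ.support, A₂ (σ j) j := by
  by_cases hadj : ∀ j ∈ σ.support, G.Adj (σ j) j
  · rw [prod_supp_eq_of_invol A₁ h₁ σ hσ hadj, prod_supp_eq_of_invol A₂ h₂ σ hσ hadj]
  · push_neg at hadj
    obtain ⟨j, hj, hn⟩ := hadj
    have e1 : ∏ j ∈ σ.support, A₁ (σ j) j = 0 := Finset.prod_eq_zero hj (h₁.2.2 _ _ hn)
    have e2 : ∏ j ∈ σ.support, A₂ (σ j) j = 0 := Finset.prod_eq_zero hj (h₂.2.2 _ _ hn)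
    rw [e1, e2]

lemma P_eq (A : Matrix (Fin n) (Fin n) ℂ) (hAG : IsGainMatrix G A) (σ : Equiv.Perm (Fin n)) :
    ∏ i, charmatrix A (σ i) i
      = X ^ (σ.supportᶜ.card) * ((-1) ^ σ.support.card * C (∏ j ∈ σ.support, A (σ j) j)) := by
  rw [← Finset.prod_mul_prod_compl σ.support (fun i => charmatrix A (σ i) i)]
  have h1 : ∏ i ∈ σ.supportᶜ, charmatrix A (σ i) i = X ^ σ.supportᶜ.card := by
    calc ∏ i ∈ σ.supportᶜ, charmatrix A (σ i) i
        = ∏ _i ∈ σ.supportᶜ, (X : ℂ[X]) := Finset.prod_congr rfl (fun j hj => by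
          have hfix : σ j = j := Equiv.Perm.notMem_support.mp (Finset.mem_compl.mp hj)
          rw [hfix, charmatrix_apply_eq, hAG.2.2 j j (G.irrefl), map_zero, sub_zero])
      _ = X ^ σ.supportᶜ.card := Finset.prod_const _
  have h2 : ∏ i ∈ σ.support, charmatrix A (σ i) i
      = (-1) ^ σ.support.card * C (∏ j ∈ σ.support, A (σ j) j) := by
    calc ∏ i ∈ σ.support, charmatrix A (σ i) i
        = ∏ i ∈ σ.support, (-1 * C (A (σ i) i)) := Finset.prod_congr rfl (fun j hj => by
          rw [charmatrix_apply_ne _ _ _ (Equiv.Perm.mem_support.mp hj), neg_one_mul])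
      _ = (∏ _i ∈ σ.support, (-1 : ℂ[X])) * ∏ i ∈ σ.support, C (A (σ i) i) :=
          Finset.prod_mul_distrib
      _ = (-1) ^ σ.support.card * C (∏ j ∈ σ.support, A (σ j) j) := by
          rw [Finset.prod_const, map_prod]
  rw [h1, h2]
  ring

lemma prod_supp_add_flip (A : Matrix (Fin n) (Fin n) ℂ) (hA : IsGainMatrix G A)
    (hre : ∀ (v : Fin n) (c : G.Walk v v), c.IsCycle → (walkGain A c).re = 0)
    (σ : Equiv.Perm (Fin n)) (hσ : σ * σ ≠ 1) :
    (∏ j ∈ σ.support, A (σ j) j) + (∏ j ∈ (flip σ).support, A (flip σ j) j) = 0 := by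
  have hsub : (σ.cycleOf (fpt hσ)).support ⊆ σ.support :=
    Equiv.Perm.support_cycleOf_le σ (fpt hσ)
  have hsplit1 : ∏ j ∈ σ.support, A (σ j) j
      = (∏ j ∈ σ.support \ (σ.cycleOf (fpt hσ)).support, A (σ j) j)
        * ∏ j ∈ (σ.cycleOf (fpt hσ)).support, A (σ j) j := (Finset.prod_sdiff hsub).symm
  have hsplit2 : ∏ j ∈ (flip σ).support, A (flip σ j) j
      = (∏ j ∈ σ.support \ (σ.cycleOf (fpt hσ)).support, A (flip σ j) j)
        * ∏ j ∈ (σ.cycleOf (fpt hσ)).support, A (flip σ j) j := by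
    rw [flip_support hσ]
    exact (Finset.prod_sdiff hsub).symm
  have hoff : ∏ j ∈ σ.support \ (σ.cycleOf (fpt hσ)).support, A (flip σ j) j
      = ∏ j ∈ σ.support \ (σ.cycleOf (fpt hσ)).support, A (σ j) j :=
    Finset.prod_congr rfl (fun j hj => by
      rw [flip_apply_not_mem hσ (Finset.mem_sdiff.mp hj).2])
  have hong : ∏ j ∈ (σ.cycleOf (fpt hσ)).support, A (σ j) j
      = ∏ j ∈ (σ.cycleOf (fpt hσ)).support, A ((σ.cycleOf (fpt hσ)) j) j :=
    Finset.prod_congr rfl (fun j hj => by rw [cyc_apply_eq hσ hj])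
  have hconj : ∏ j ∈ (σ.cycleOf (fpt hσ)).support, A (flip σ j) j
      = (starRingEnd ℂ) (∏ j ∈ (σ.cycleOf (fpt hσ)).support, A ((σ.cycleOf (fpt hσ)) j) j) := by
    have e1 : ∏ j ∈ (σ.cycleOf (fpt hσ)).support, A (flip σ j) j
        = ∏ j ∈ (σ.cycleOf (fpt hσ)).support, A ((σ.cycleOf (fpt hσ))⁻¹ j) j :=
      Finset.prod_congr rfl (fun j hj => by rw [flip_apply_mem hσ hj])
    have e2 := Equiv.Perm.prod_comp (σ.cycleOf (fpt hσ)) (σ.cycleOf (fpt hσ)).support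
      (fun j => A ((σ.cycleOf (fpt hσ))⁻¹ j) j)
      (fun x hx => by simpa using Equiv.Perm.mem_support.mpr hx)
    have e3 : ∏ j ∈ (σ.cycleOf (fpt hσ)).support,
        A ((σ.cycleOf (fpt hσ))⁻¹ ((σ.cycleOf (fpt hσ)) j)) ((σ.cycleOf (fpt hσ)) j)
        = ∏ j ∈ (σ.cycleOf (fpt hσ)).support, A j ((σ.cycleOf (fpt hσ)) j) :=
      Finset.prod_congr rfl (fun j hj => by rw [← Equiv.Perm.mul_apply, inv_mul_cancel, Equiv.Perm.one_apply])
    have e4 : ∏ j ∈ (σ.cycleOf (fpt hσ)).support, A j ((σ.cycleOf (fpt hσ)) j)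
        = ∏ j ∈ (σ.cycleOf (fpt hσ)).support,
            (starRingEnd ℂ) (A ((σ.cycleOf (fpt hσ)) j) j) :=
      Finset.prod_congr rfl (fun j hj => by
        rw [← hA.1.apply j ((σ.cycleOf (fpt hσ)) j)]; rfl)
    rw [e1, ← e2, e3, e4, map_prod]
  have hre0 : (∏ j ∈ (σ.cycleOf (fpt hσ)).support, A ((σ.cycleOf (fpt hσ)) j) j).re = 0 :=
    re_prod_eq_zero A hA hre (σ.cycleOf (fpt hσ)) (cyc_isCycle hσ) (cyc_card_ge_three hσ)
      (fpt hσ) (fpt_mem_supp_cyc hσ)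
  rw [hsplit1, hsplit2, hoff, hong, hconj, ← mul_add, Complex.add_conj, hre0]
  norm_num

lemma term_flip_sum_zero (A : Matrix (Fin n) (Fin n) ℂ) (hA : IsGainMatrix G A)
    (hre : ∀ (v : Fin n) (c : G.Walk v v), c.IsCycle → (walkGain A c).re = 0)
    (σ : Equiv.Perm (Fin n)) (hσ : σ * σ ≠ 1) :
    Equiv.Perm.sign σ • ∏ i, charmatrix A (σ i) i
      + Equiv.Perm.sign (flip σ) • ∏ i, charmatrix A ((flip σ) i) i = 0 := by
  rw [flip_sign hσ, P_eq A hA σ, P_eq A hA (flip σ), flip_support hσ, ← smul_add]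
  have hpq := prod_supp_add_flip A hA hre σ hσ
  have : X ^ σ.supportᶜ.card * ((-1) ^ σ.support.card * C (∏ j ∈ σ.support, A (σ j) j))
      + X ^ σ.supportᶜ.card * ((-1) ^ σ.support.card * C (∏ j ∈ σ.support, A (flip σ j) j))
      = X ^ σ.supportᶜ.card * ((-1) ^ σ.support.card
          * C ((∏ j ∈ σ.support, A (σ j) j) + ∏ j ∈ σ.support, A (flip σ j) j)) := by
    rw [map_add]; ring
  rw [this]
  rw [show (∏ j ∈ σ.support, A (σ j) j) + ∏ j ∈ σ.support, A (flip σ j) j = 0 from by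
    rw [← flip_support hσ] at hpq ⊢ <;> exact hpq]
  rw [map_zero, mul_zero, mul_zero, smul_zero]

lemma charpoly_eq_of_gains (A₁ A₂ : Matrix (Fin n) (Fin n) ℂ)
    (h₁ : IsGainMatrix G A₁) (h₂ : IsGainMatrix G A₂)
    (hre₁ : ∀ (v : Fin n) (c : G.Walk v v), c.IsCycle → (walkGain A₁ c).re = 0)
    (hre₂ : ∀ (v : Fin n) (c : G.Walk v v), c.IsCycle → (walkGain A₂ c).re = 0) :
    A₁.charpoly = A₂.charpoly := by
  rw [Matrix.charpoly, Matrix.charpoly, Matrix.det_apply, Matrix.det_apply, ← sub_eq_zero,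
    ← Finset.sum_sub_distrib]
  have hzero : ∀ σ : Equiv.Perm (Fin n), σ * σ = 1 →
      Equiv.Perm.sign σ • ∏ i, charmatrix A₁ (σ i) i
        - Equiv.Perm.sign σ • ∏ i, charmatrix A₂ (σ i) i = 0 := by
    intro σ hσ
    have hP : ∏ i, charmatrix A₁ (σ i) i = ∏ i, charmatrix A₂ (σ i) i := by
      rw [P_eq A₁ h₁ σ, P_eq A₂ h₂ σ, prod_supp_invol_eq A₁ A₂ h₁ h₂ σ hσ]
    rw [hP, sub_self]
  refine Finset.sum_involution (fun σ _ => flip σ) ?_ ?_ (fun σ _ => Finset.mem_univ _) ?_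
  · intro σ _
    by_cases hσ : σ * σ = 1
    · rw [flip_of_sq_eq_one hσ, hzero σ hσ, add_zero]
    · have k₁ := term_flip_sum_zero A₁ h₁ hre₁ σ hσ
      have k₂ := term_flip_sum_zero A₂ h₂ hre₂ σ hσ
      calc Equiv.Perm.sign σ • ∏ i, charmatrix A₁ (σ i) i
            - Equiv.Perm.sign σ • ∏ i, charmatrix A₂ (σ i) i
            + (Equiv.Perm.sign (flip σ) • ∏ i, charmatrix A₁ ((flip σ) i) i
              - Equiv.Perm.sign (flip σ) • ∏ i, charmatrix A₂ ((flip σ) i) i)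
          = (Equiv.Perm.sign σ • ∏ i, charmatrix A₁ (σ i) i
              + Equiv.Perm.sign (flip σ) • ∏ i, charmatrix A₁ ((flip σ) i) i)
            - (Equiv.Perm.sign σ • ∏ i, charmatrix A₂ (σ i) i
              + Equiv.Perm.sign (flip σ) • ∏ i, charmatrix A₂ ((flip σ) i) i) := by ring
        _ = 0 := by rw [k₁, k₂, sub_self]
  · intro σ _ hne
    by_cases hσ : σ * σ = 1
    · exact absurd (hzero σ hσ) hne
    · exact flip_ne hσ
  · intro σ _
    by_cases hσ : σ * σ = 1
    · rw [flip_of_sq_eq_one hσ, flip_of_sq_eq_one hσ]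
    · exact flip_flip hσ

end EqEnergy

/-- The energy of a Hermitian matrix: the sum of the absolute values of its eigenvalues. -/
noncomputable def energy {n : ℕ} {A : Matrix (Fin n) (Fin n) ℂ} (hA : A.IsHermitian) : ℝ :=
  ∑ i, |hA.eigenvalues i|

lemma energy_eq_of_charpoly_eq {n : ℕ} {A₁ A₂ : Matrix (Fin n) (Fin n) ℂ}
    (h₁ : A₁.IsHermitian) (h₂ : A₂.IsHermitian) (h : A₁.charpoly = A₂.charpoly) :
    energy h₁ = energy h₂ := by
  have key : (Finset.univ.val.map (fun i => (h₁.eigenvalues i : ℂ)))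
      = (Finset.univ.val.map (fun i => (h₂.eigenvalues i : ℂ))) := by
    have e1 := herm_charpoly h₁
    have e2 := herm_charpoly h₂
    rw [e1, e2] at h
    have r1 : (∏ i, (X - C ((h₁.eigenvalues i : ℂ)))).roots
        = Finset.univ.val.map (fun i => (h₁.eigenvalues i : ℂ)) := by
      rw [Finset.prod_eq_multiset_prod]
      rw [show (Finset.univ.val.map fun i => X - C ((h₁.eigenvalues i : ℂ)))
          = ((Finset.univ.val.map (fun i => (h₁.eigenvalues i : ℂ))).map fun a => X - C a) by
        rw [Multiset.map_map]; rfl]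
      exact roots_multiset_prod_X_sub_C _
    have r2 : (∏ i, (X - C ((h₂.eigenvalues i : ℂ)))).roots
        = Finset.univ.val.map (fun i => (h₂.eigenvalues i : ℂ)) := by
      rw [Finset.prod_eq_multiset_prod]
      rw [show (Finset.univ.val.map fun i => X - C ((h₂.eigenvalues i : ℂ)))
          = ((Finset.univ.val.map (fun i => (h₂.eigenvalues i : ℂ))).map fun a => X - C a) by
        rw [Multiset.map_map]; rfl]
      exact roots_multiset_prod_X_sub_C _
    rw [← r1, ← r2, h]
  have habs : ∀ {μ : Fin n → ℝ}, (∑ i, |μ i|)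
      = ((Finset.univ.val.map (fun i => (μ i : ℂ))).map (fun z => ‖z‖)).sum := by
    intro μ
    rw [Multiset.map_map, Finset.sum]
    congr 1
    ext i
    simp
  rw [energy, energy, habs, habs, key]

/-- If the cycles of `G` are pairwise vertex-disjoint and two gain structures on `G`
both give every cycle a purely imaginary gain, then they are equienergetic. -/
theorem equienergetic_of_purely_imaginary_cycle_gains {n : ℕ} (G : SimpleGraph (Fin n))
    (hdisj : ∀ (u w : Fin n) (c : G.Walk u u) (d : G.Walk w w), c.IsCycle → d.IsCycle →
      (c.edges.toFinset = d.edges.toFinset ∨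
        ∀ x : Fin n, ¬(x ∈ c.support ∧ x ∈ d.support)))
    (A₁ A₂ : Matrix (Fin n) (Fin n) ℂ)
    (hA₁ : IsGainMatrix G A₁) (hA₂ : IsGainMatrix G A₂)
    (hre₁ : ∀ (v : Fin n) (c : G.Walk v v), c.IsCycle → (walkGain A₁ c).re = 0)
    (hre₂ : ∀ (v : Fin n) (c : G.Walk v v), c.IsCycle → (walkGain A₂ c).re = 0) :
    energy hA₁.1 = energy hA₂.1 := by
  exact energy_eq_of_charpoly_eq hA₁.1 hA₂.1
    (EqEnergy.charpoly_eq_of_gains A₁ A₂ hA₁ hA₂ hre₁ hre₂)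

end AuxProofs
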